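/- arXiv:2111.02863 — 3 statements merged into one kernel-verified Lean document; each statement's English description precedes it below -/
import Mathlib

section
/- Let X be a real random variable and U₁, …, U_k be real random variables such that X, U₁, …, U_k are mutually independent and each U_j is symmetric about zero. Let a₁, …, a_k be real constants with Σ_{j=1}^k a_j = 0 and Σ_{j=1}^k |a_j| = 1, and define the error-prone measurements X_j* = X + U_j for j = 1, …, k. Then the random variables Σ_{j=1}^k |a_j| X_j* and X + Σ_{j=1}^k a_j X_j* are identically distributed. (In particular, the contrast-averaged proxy X̃* = Σ_j |a_j| X_j* equals in distribution the true variable X contaminated by the observable error Ũ = Σ_j a_j X_j*.) -/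
open MeasureTheory ProbabilityTheory

lemma identDistrib_const {Ω Ω' : Type*} [MeasurableSpace Ω] [MeasurableSpace Ω']
    {P : Measure Ω} {P' : Measure Ω'} [IsProbabilityMeasure P] [IsProbabilityMeasure P']
    (c : ℝ) : IdentDistrib (fun _ : Ω => c) (fun _ : Ω' => c) P P' := by
  refine ⟨aemeasurable_const, aemeasurable_const, ?_⟩
  rw [Measure.map_const, Measure.map_const, measure_univ, measure_univ]

lemma sum_identDistrib {Ω Ω' : Type*} [MeasurableSpace Ω] [MeasurableSpace Ω']
    {P : Measure Ω} {P' : Measure Ω'} [IsProbabilityMeasure P] [IsProbabilityMeasure P']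
    {ι : Type*} {f : ι → Ω → ℝ} {g : ι → Ω' → ℝ}
    (hf : iIndepFun f P)
    (hg : iIndepFun g P')
    (hfm : ∀ i, Measurable (f i)) (hgm : ∀ i, Measurable (g i))
    (hfg : ∀ i, IdentDistrib (f i) (g i) P P') (s : Finset ι) :
    IdentDistrib (fun ω => ∑ i ∈ s, f i ω) (fun ω => ∑ i ∈ s, g i ω) P P' := by
  classical
  induction s using Finset.induction_on with
  | empty => simpa using identDistrib_const 0
  | @insert i s hi ih =>
    have hfs : Measurable (fun ω => ∑ j ∈ s, f j ω) := by
      exact Finset.measurable_sum s (fun j _ => hfm j)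
    have hgs : Measurable (fun ω => ∑ j ∈ s, g j ω) := by
      exact Finset.measurable_sum s (fun j _ => hgm j)
    have hsumf : (∑ j ∈ s, f j) = fun ω => ∑ j ∈ s, f j ω :=
      funext fun ω => Finset.sum_apply ω s f
    have hsumg : (∑ j ∈ s, g j) = fun ω => ∑ j ∈ s, g j ω :=
      funext fun ω => Finset.sum_apply ω s g
    have hif : IndepFun (f i) (fun ω => ∑ j ∈ s, f j ω) P := by
      have := (hf.indepFun_finsetSum_of_notMem hfm hi).symm
      rwa [hsumf] at this
    have hig : IndepFun (g i) (fun ω => ∑ j ∈ s, g j ω) P' := by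
      have := (hg.indepFun_finsetSum_of_notMem hgm hi).symm
      rwa [hsumg] at this
    have hpair : IdentDistrib (fun ω => (f i ω, ∑ j ∈ s, f j ω))
        (fun ω => (g i ω, ∑ j ∈ s, g j ω)) P P' := by
      refine ⟨((hfm i).prodMk hfs).aemeasurable, ((hgm i).prodMk hgs).aemeasurable, ?_⟩
      rw [(indepFun_iff_map_prod_eq_prod_map_map (hfm i).aemeasurable hfs.aemeasurable).1 hif,
        (indepFun_iff_map_prod_eq_prod_map_map (hgm i).aemeasurable hgs.aemeasurable).1 hig,
        (hfg i).map_eq, ih.map_eq]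
    have := hpair.comp (measurable_fst.add measurable_snd)
    simpa [Finset.sum_insert hi, Function.comp_def] using this

/-- In the additive measurement error model with replicates `Xstar j = X + U j`,
where `X, U 1, …, U k` are mutually independent and each error `U j` is symmetric
about zero, if the contrast `a` satisfies `∑ j, a j = 0` and `∑ j, |a j| = 1`, then
`∑ j, |a j| * Xstar j` and `X + ∑ j, a j * Xstar j` are identically distributed. -/
theorem stmt2 {Ω : Type*} [MeasurableSpace Ω] (P : Measure Ω) [IsProbabilityMeasure P]
    (k : ℕ) (X : Ω → ℝ) (U : Fin k → Ω → ℝ) (a : Fin k → ℝ)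
    (hXmeas : Measurable X) (hUmeas : ∀ j, Measurable (U j))
    (hindep : iIndepFun
      (Fin.cases X U : Fin (k + 1) → Ω → ℝ) P)
    (hsym : ∀ j, IdentDistrib (U j) (fun ω => -U j ω) P P)
    (ha0 : ∑ j, a j = 0) (ha1 : ∑ j, |a j| = 1)
    (Xstar : Fin k → Ω → ℝ) (hXstar : ∀ j ω, Xstar j ω = X ω + U j ω) :
    IdentDistrib (fun ω => ∑ j, |a j| * Xstar j ω)
      (fun ω => X ω + ∑ j, a j * Xstar j ω) P P := by
  set F : Fin (k + 1) → Ω → ℝ := (Fin.cases X U : Fin (k + 1) → Ω → ℝ) with hF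
  have hFmeas : ∀ i, Measurable (F i) := by
    intro i
    induction i using Fin.cases with
    | zero => simpa [hF] using hXmeas
    | succ j => simpa [hF] using hUmeas j
  set b₁ : Fin (k + 1) → ℝ := Fin.cases 1 (fun j => |a j|) with hb₁
  set b₂ : Fin (k + 1) → ℝ := Fin.cases 1 a with hb₂
  set G₁ : Fin (k + 1) → Ω → ℝ := fun i ω => b₁ i * F i ω with hG₁
  set G₂ : Fin (k + 1) → Ω → ℝ := fun i ω => b₂ i * F i ω with hG₂
  have hG₁indep : iIndepFun G₁ P :=
    hindep.comp (fun i x => b₁ i * x) (fun i => measurable_const_mul _)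
  have hG₂indep : iIndepFun G₂ P :=
    hindep.comp (fun i x => b₂ i * x) (fun i => measurable_const_mul _)
  have hG₁meas : ∀ i, Measurable (G₁ i) := fun i => (hFmeas i).const_mul _
  have hG₂meas : ∀ i, Measurable (G₂ i) := fun i => (hFmeas i).const_mul _
  have hGid : ∀ i, IdentDistrib (G₁ i) (G₂ i) P P := by
    intro i
    induction i using Fin.cases with
    | zero =>
      simp only [hG₁, hG₂, hb₁, hb₂, Fin.cases_zero]
      exact IdentDistrib.refl ((hFmeas 0).const_mul 1).aemeasurable
    | succ j =>
      simp only [hG₁, hG₂, hb₁, hb₂, hF, Fin.cases_succ]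
      rcases le_or_gt 0 (a j) with h | h
      · rw [abs_of_nonneg h]
        exact IdentDistrib.refl ((hUmeas j).const_mul _).aemeasurable
      · have habs : |a j| = -a j := abs_of_neg h
        have := (hsym j).comp (measurable_const_mul (|a j|))
        have heq : (fun ω => |a j| * (-U j ω)) = fun ω => a j * U j ω := by
          funext ω; rw [habs]; ring
        simp only [Function.comp_def] at this
        rw [heq] at this
        exact this
  have hsum := sum_identDistrib hG₁indep hG₂indep hG₁meas hG₂meas hGid Finset.univ
  have hL : (fun ω => ∑ j, |a j| * Xstar j ω) = fun ω => ∑ i, G₁ i ω := by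
    funext ω
    rw [Fin.sum_univ_succ]
    simp only [hG₁, hb₁, hF, Fin.cases_zero, Fin.cases_succ, hXstar, one_mul, mul_add]
    rw [Finset.sum_add_distrib, ← Finset.sum_mul, ha1, one_mul]
  have hR : (fun ω => X ω + ∑ j, a j * Xstar j ω) = fun ω => ∑ i, G₂ i ω := by
    funext ω
    rw [Fin.sum_univ_succ]
    simp only [hG₂, hb₂, hF, Fin.cases_zero, Fin.cases_succ, hXstar, one_mul, mul_add]
    rw [Finset.sum_add_distrib, ← Finset.sum_mul, ha0, zero_mul, zero_add]
  rw [hL, hR]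
  exact hsum
end

section
/- Let X, W₀, W₁, …, W_n be mutually independent real random variables, where W₀, …, W_n are identically distributed, symmetric about zero, with variance σ² and finite fourth moment m₄ = E[W₀⁴], and X has finite fourth moment. Write μ₂ = E[X²] and μ₄ = E[X⁴]. Then for every nonnegative integer n, E[(X + Σ_{j=0}^n W_j)⁴] = μ₄ + 6μ₂(1 + n)σ² + (n + 1)m₄ + 3(n + 1)n σ⁴. Consequently, the quadratic polynomial g(λ) = μ₄ + 6μ₂(1 + λ)σ² + (1 + λ)m₄ + 3(1 + λ)λσ⁴, which agrees with this expectation at every nonnegative integer λ = n, satisfies g(−1) = μ₄, regardless of the value of m₄. -/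
open MeasureTheory ProbabilityTheory

private lemma aux_int_pow {Ω : Type*} [MeasurableSpace Ω] {P : Measure Ω}
    [IsProbabilityMeasure P] {f : Ω → ℝ} (hf : MemLp f 4 P) {k : ℕ} (hk : k ≤ 4) :
    Integrable (fun ω => f ω ^ k) P := by
  have h4 : Integrable (fun ω => ‖f ω‖ ^ (4 : ℕ)) P := by
    have h := hf.integrable_norm_rpow (by norm_num) (by norm_num)
    have heq : (fun ω => ‖f ω‖ ^ ((4 : ENNReal)).toReal) = fun ω => ‖f ω‖ ^ (4 : ℕ) := by
      funext ω
      rw [show ((4 : ENNReal)).toReal = ((4 : ℕ) : ℝ) by norm_num, Real.rpow_natCast]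
    rwa [heq] at h
  refine Integrable.mono' ((integrable_const (1 : ℝ)).add h4) ?_ ?_
  · exact (hf.aestronglyMeasurable.aemeasurable.pow_const k).aestronglyMeasurable
  · filter_upwards with ω
    simp only [Pi.add_apply]
    rw [norm_pow]
    rcases le_total (‖f ω‖) 1 with h | h
    · have h1 : ‖f ω‖ ^ k ≤ 1 := pow_le_one₀ (norm_nonneg _) h
      have h2 : (0 : ℝ) ≤ ‖f ω‖ ^ (4 : ℕ) := pow_nonneg (norm_nonneg _) _
      linarith
    · have h1 : ‖f ω‖ ^ k ≤ ‖f ω‖ ^ (4 : ℕ) := pow_le_pow_right₀ h hk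
      linarith

private lemma aux_step {Ω : Type*} [MeasurableSpace Ω] {P : Measure Ω}
    [IsProbabilityMeasure P] {σ2 m4 : ℝ} {U V : Ω → ℝ}
    (hU : MemLp U 4 P) (hV : MemLp V 4 P) (hind : IndepFun U V P)
    (hV1 : ∫ ω, V ω ∂P = 0) (hV2 : ∫ ω, V ω ^ 2 ∂P = σ2)
    (hV3 : ∫ ω, V ω ^ 3 ∂P = 0) (hV4 : ∫ ω, V ω ^ 4 ∂P = m4) :
    (∫ ω, (U ω + V ω) ^ 2 ∂P = (∫ ω, U ω ^ 2 ∂P) + σ2) ∧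
    (∫ ω, (U ω + V ω) ^ 4 ∂P =
      (∫ ω, U ω ^ 4 ∂P) + 6 * σ2 * (∫ ω, U ω ^ 2 ∂P) + m4) := by
  have hip : ∀ a b : ℕ, IndepFun (fun ω => U ω ^ a) (fun ω => V ω ^ b) P := fun a b =>
    hind.comp (measurable_id.pow_const a) (measurable_id.pow_const b)
  have iU : ∀ k : ℕ, k ≤ 4 → Integrable (fun ω => U ω ^ k) P := fun _ hk => aux_int_pow hU hk
  have iV : ∀ k : ℕ, k ≤ 4 → Integrable (fun ω => V ω ^ k) P := fun _ hk => aux_int_pow hV hk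
  have iprod : ∀ a b : ℕ, a ≤ 4 → b ≤ 4 →
      Integrable (fun ω => U ω ^ a * V ω ^ b) P := fun a b ha hb =>
    (hip a b).integrable_mul (iU a ha) (iV b hb)
  have hmul : ∀ a b : ℕ, ∫ ω, U ω ^ a * V ω ^ b ∂P =
      (∫ ω, U ω ^ a ∂P) * (∫ ω, V ω ^ b ∂P) := fun a b =>
    (hip a b).integral_fun_mul_eq_mul_integral
      (hU.aestronglyMeasurable.aemeasurable.pow_const a).aestronglyMeasurable
      (hV.aestronglyMeasurable.aemeasurable.pow_const b).aestronglyMeasurable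
  constructor
  · have hfun : (fun ω => (U ω + V ω) ^ 2) =
        fun ω => U ω ^ 2 + (2 * (U ω ^ 1 * V ω ^ 1) + V ω ^ 2) := by
      funext ω; ring
    have i11 : Integrable (fun ω => 2 * (U ω ^ 1 * V ω ^ 1)) P :=
      (iprod 1 1 (by norm_num) (by norm_num)).const_mul 2
    have irest : Integrable (fun ω => 2 * (U ω ^ 1 * V ω ^ 1) + V ω ^ 2) P :=
      i11.add (iV 2 (by norm_num))
    rw [hfun, integral_add (iU 2 (by norm_num)) irest,
      integral_add i11 (iV 2 (by norm_num)), integral_const_mul, hmul]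
    simp only [pow_one, hV1, hV2]
    ring
  · have hfun : (fun ω => (U ω + V ω) ^ 4) =
        fun ω => U ω ^ 4 + (4 * (U ω ^ 3 * V ω ^ 1) + (6 * (U ω ^ 2 * V ω ^ 2) +
          (4 * (U ω ^ 1 * V ω ^ 3) + V ω ^ 4))) := by
      funext ω; ring
    have i31 : Integrable (fun ω => 4 * (U ω ^ 3 * V ω ^ 1)) P :=
      (iprod 3 1 (by norm_num) (by norm_num)).const_mul 4
    have i22 : Integrable (fun ω => 6 * (U ω ^ 2 * V ω ^ 2)) P :=
      (iprod 2 2 (by norm_num) (by norm_num)).const_mul 6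
    have i13 : Integrable (fun ω => 4 * (U ω ^ 1 * V ω ^ 3)) P :=
      (iprod 1 3 (by norm_num) (by norm_num)).const_mul 4
    have i4 : Integrable (fun ω => V ω ^ 4) P := iV 4 (by norm_num)
    have r3 : Integrable (fun ω => 4 * (U ω ^ 1 * V ω ^ 3) + V ω ^ 4) P := i13.add i4
    have r2 : Integrable (fun ω => 6 * (U ω ^ 2 * V ω ^ 2) +
        (4 * (U ω ^ 1 * V ω ^ 3) + V ω ^ 4)) P := i22.add r3
    have r1 : Integrable (fun ω => 4 * (U ω ^ 3 * V ω ^ 1) + (6 * (U ω ^ 2 * V ω ^ 2) +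
        (4 * (U ω ^ 1 * V ω ^ 3) + V ω ^ 4))) P := i31.add r2
    rw [hfun, integral_add (iU 4 (by norm_num)) r1,
      integral_add i31 r2, integral_add i22 r3,
      integral_add i13 i4, integral_const_mul, integral_const_mul, integral_const_mul,
      hmul, hmul, hmul]
    simp only [pow_one, hV1, hV2, hV3, hV4]
    ring


/-- NP-SIMEX computation for the fourth moment: if `X, W 0, …, W n` are mutually
independent, the `W j` are identically distributed, symmetric about zero, with
variance `σ²` and fourth moment `m₄`, and `X` has finite fourth moment with
`μ₂ = E[X²]`, `μ₄ = E[X⁴]`, then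
`E[(X + ∑_{j=0}^n W j)⁴] = μ₄ + 6μ₂(1+n)σ² + (n+1)m₄ + 3(n+1)n σ⁴`, and the
quadratic extrapolant `g(λ) = μ₄ + 6μ₂(1+λ)σ² + (1+λ)m₄ + 3(1+λ)λσ⁴` satisfies
`g(-1) = μ₄`, regardless of the value of `m₄`. -/
theorem stmt8 {Ω : Type*} [MeasurableSpace Ω] (P : Measure Ω) [IsProbabilityMeasure P]
    (n : ℕ) (σ2 m4 μ2 μ4 : ℝ)
    (X : Ω → ℝ) (W : Fin (n + 1) → Ω → ℝ)
    (hXmeas : Measurable X) (hWmeas : ∀ j, Measurable (W j))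
    (hindep : iIndepFun
      (Fin.cases X W : Fin (n + 2) → Ω → ℝ) P)
    (hident : ∀ j j', IdentDistrib (W j) (W j') P P)
    (hsym : ∀ j, IdentDistrib (W j) (fun ω => -W j ω) P P)
    (hX4 : MemLp X 4 P) (hW4 : ∀ j, MemLp (W j) 4 P)
    (hvar : ∀ j, variance (W j) P = σ2)
    (hm4 : ∀ j, ∫ ω, W j ω ^ 4 ∂P = m4)
    (hμ2 : ∫ ω, X ω ^ 2 ∂P = μ2) (hμ4 : ∫ ω, X ω ^ 4 ∂P = μ4)
    (g : ℝ → ℝ)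
    (hg : ∀ l : ℝ, g l = μ4 + 6 * μ2 * (1 + l) * σ2 + (1 + l) * m4 + 3 * (1 + l) * l * σ2 ^ 2) :
    (∫ ω, (X ω + ∑ j, W j ω) ^ 4 ∂P =
      μ4 + 6 * μ2 * (1 + (n : ℝ)) * σ2 + ((n : ℝ) + 1) * m4 +
        3 * ((n : ℝ) + 1) * (n : ℝ) * σ2 ^ 2) ∧
    g (-1) = μ4 := by

  classical
  have fmeas : ∀ i : Fin (n + 2), Measurable ((Fin.cases X W : Fin (n + 2) → Ω → ℝ) i) :=
    fun i => Fin.cases hXmeas hWmeas i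
  -- independence of partial sums from a fresh W j
  have hindep' : ∀ (s : Finset (Fin (n + 1))) (j : Fin (n + 1)), j ∉ s →
      IndepFun (fun ω => X ω + ∑ i ∈ s, W i ω) (W j) P := by
    intro s j hj
    have hmem : j.succ ∉ insert (0 : Fin (n + 2)) (s.image Fin.succ) := by
      simp only [Finset.mem_insert, Finset.mem_image, not_or]
      refine ⟨Fin.succ_ne_zero j, ?_⟩
      rintro ⟨a, ha, haj⟩
      exact hj ((Fin.succ_injective _ haj) ▸ ha)
    have h := hindep.indepFun_finsetSum_of_notMem fmeas hmem
    have h0 : (0 : Fin (n + 2)) ∉ s.image Fin.succ := by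
      simp only [Finset.mem_image, not_exists]
      intro a
      simp [Fin.succ_ne_zero a]
    have hsum : (∑ i ∈ insert (0 : Fin (n + 2)) (s.image Fin.succ),
        (Fin.cases X W : Fin (n + 2) → Ω → ℝ) i) = fun ω => X ω + ∑ i ∈ s, W i ω := by
      funext ω
      rw [Finset.sum_insert h0]
      simp only [Finset.sum_apply, Pi.add_apply]
      rw [Finset.sum_image (fun a _ b _ h => Fin.succ_injective _ h)]
      simp [Fin.cases_zero, Fin.cases_succ]
    rw [hsum] at h
    simp only [Fin.cases_succ] at h
    exact h
  -- moments of the W j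
  have hW1 : ∀ j, ∫ ω, W j ω ∂P = 0 := by
    intro j
    have h := (hsym j).integral_eq
    rw [integral_neg] at h
    linarith
  have hW3 : ∀ j, ∫ ω, W j ω ^ 3 ∂P = 0 := by
    intro j
    have h := ((hsym j).comp (measurable_id.pow_const 3)).integral_eq
    simp only [Function.comp_def, id_eq] at h
    have hodd : ∀ ω, (-W j ω) ^ 3 = -(W j ω ^ 3) := fun ω => by ring
    simp only [hodd, integral_neg] at h
    linarith
  have hW2 : ∀ j, ∫ ω, W j ω ^ 2 ∂P = σ2 := by
    intro j
    have h2 : MemLp (W j) 2 P := (hW4 j).mono_exponent (by norm_num)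
    have h := variance_eq_sub h2
    simp only [Pi.pow_apply] at h
    rw [hvar j, hW1 j] at h
    simpa using h.symm
  -- main induction on finsets
  have main : ∀ s : Finset (Fin (n + 1)),
      (∫ ω, (X ω + ∑ j ∈ s, W j ω) ^ 2 ∂P = μ2 + s.card * σ2) ∧
      (∫ ω, (X ω + ∑ j ∈ s, W j ω) ^ 4 ∂P =
        μ4 + 6 * μ2 * s.card * σ2 + s.card * m4 +
          3 * s.card * (s.card - 1) * σ2 ^ 2) := by
    intro s
    induction s using Finset.induction_on with
    | empty => simp [hμ2, hμ4]
    | @insert j s hj ih =>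
      have hUmem : MemLp (fun ω => X ω + ∑ i ∈ s, W i ω) 4 P := by
        have hsumW : MemLp (fun ω => ∑ i ∈ s, W i ω) 4 P := by
          have h := memLp_finset_sum' (μ := P) (p := 4) s (fun i _ => hW4 i)
          have heq : (∑ i ∈ s, W i) = fun ω => ∑ i ∈ s, W i ω := by
            funext ω; simp [Finset.sum_apply]
          rwa [heq] at h
        exact hX4.add hsumW
      obtain ⟨g2, g4⟩ := aux_step hUmem (hW4 j) (hindep' s j hj)
        (hW1 j) (hW2 j) (hW3 j) (hm4 j)
      obtain ⟨e2, e4⟩ := ih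
      have hfun2 : (fun ω => (X ω + ∑ i ∈ insert j s, W i ω) ^ 2) =
          fun ω => ((X ω + ∑ i ∈ s, W i ω) + W j ω) ^ 2 := by
        funext ω; rw [Finset.sum_insert hj]; ring
      have hfun4 : (fun ω => (X ω + ∑ i ∈ insert j s, W i ω) ^ 4) =
          fun ω => ((X ω + ∑ i ∈ s, W i ω) + W j ω) ^ 4 := by
        funext ω; rw [Finset.sum_insert hj]; ring
      rw [Finset.card_insert_of_notMem hj]
      constructor
      · rw [show (∫ ω, (X ω + ∑ i ∈ insert j s, W i ω) ^ 2 ∂P) =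
            ∫ ω, ((X ω + ∑ i ∈ s, W i ω) + W j ω) ^ 2 ∂P by rw [hfun2]]
        rw [g2, e2]
        push_cast
        ring
      · rw [show (∫ ω, (X ω + ∑ i ∈ insert j s, W i ω) ^ 4 ∂P) =
            ∫ ω, ((X ω + ∑ i ∈ s, W i ω) + W j ω) ^ 4 ∂P by rw [hfun4]]
        rw [g4, e4, e2]
        push_cast
        ring
  constructor
  · have h := (main Finset.univ).2
    rw [Finset.card_univ, Fintype.card_fin] at h
    rw [h]
    push_cast
    ring
  · rw [hg]
    ring
end

section
/- Let X, W, N be mutually independent real random variables, where W is symmetric about zero with variance σ² and finite fourth moment m₄ = E[W⁴], N is Gaussian with mean 0 and variance λσ² for some λ ≥ 0, and X has finite fourth moment. Write μ₂ = E[X²] and μ₄ = E[X⁴]. Then E[(X + W + N)⁴] = μ₄ + 6μ₂(1 + λ)σ² + m₄ + 6λσ⁴ + 3λ²σ⁴. Consequently the quadratic polynomial h(λ) = μ₄ + 6μ₂(1 + λ)σ² + m₄ + 6λσ⁴ + 3λ²σ⁴ that matches this expectation for all λ ≥ 0 satisfies h(−1) = μ₄ + m₄ − 3σ⁴; thus the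 parametric SIMEX extrapolation leaves residual asymptotic bias m₄ − 3σ⁴, which vanishes exactly when m₄ = 3σ⁴ (as for Gaussian errors). -/
open MeasureTheory ProbabilityTheory

open Real Set
open scoped NNReal ENNReal

private lemma aux_integrable_pow_exp {b : ℝ} (hb : 0 < b) (k : ℕ) :
    Integrable (fun x : ℝ => x ^ k * Real.exp (-b * x ^ 2)) := by
  have h := integrable_rpow_mul_exp_neg_mul_sq hb (s := (k : ℝ))
    (by have : (0:ℝ) ≤ k := Nat.cast_nonneg k; linarith)
  simpa [Real.rpow_natCast] using h

private lemma aux_integral_pow_exp {b : ℝ} (hb : 0 < b) (k : ℕ) (hk : Even k) :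
    ∫ x : ℝ, x ^ k * Real.exp (-b * x ^ 2)
      = b ^ (-((k : ℝ) + 1) / 2) * Real.Gamma (((k : ℝ) + 1) / 2) := by
  have h1 : (fun x : ℝ => x ^ k * Real.exp (-b * x ^ 2))
      = fun x : ℝ => (fun t : ℝ => t ^ k * Real.exp (-b * t ^ 2)) |x| := by
    ext x
    simp only [hk.pow_abs, sq_abs]
  calc ∫ x : ℝ, x ^ k * Real.exp (-b * x ^ 2)
      = 2 * ∫ x in Ioi (0:ℝ), x ^ k * Real.exp (-b * x ^ 2) := by
        conv_lhs => rw [h1]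
        exact integral_comp_abs (f := fun t : ℝ => t ^ k * Real.exp (-b * t ^ 2))
    _ = 2 * ∫ x in Ioi (0:ℝ), x ^ ((k:ℝ)) * Real.exp (-b * x ^ ((2:ℝ))) := by
        congr 1
        refine setIntegral_congr_fun measurableSet_Ioi fun x hx => ?_
        rw [Real.rpow_natCast, show ((2:ℝ)) = ((2:ℕ):ℝ) by norm_num, Real.rpow_natCast]
    _ = 2 * (b ^ (-((k:ℝ) + 1) / 2) * (1/2) * Real.Gamma (((k:ℝ)+1)/2)) := by
        rw [integral_rpow_mul_exp_neg_mul_rpow two_pos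
          (by have : (0:ℝ) ≤ k := Nat.cast_nonneg k; linarith) hb]
    _ = _ := by ring

private lemma aux_gauss_integral (v : ℝ≥0) (hv : v ≠ 0) (g : ℝ → ℝ) :
    ∫ x, g x ∂(gaussianReal 0 v) = ∫ x, gaussianPDFReal 0 v x * g x := by
  rw [gaussianReal_of_var_ne_zero _ hv, gaussianPDF_def]
  have h1 : (fun x => ENNReal.ofReal (gaussianPDFReal 0 v x))
      = fun x => ((Real.toNNReal (gaussianPDFReal 0 v x) : ℝ≥0) : ℝ≥0∞) := rfl
  rw [h1, integral_withDensity_eq_integral_smul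
    ((measurable_gaussianPDFReal 0 v).real_toNNReal) g]
  congr 1
  ext x
  simp [NNReal.smul_def, Real.coe_toNNReal _ (gaussianPDFReal_nonneg 0 v x)]

private lemma aux_gauss_integrable (v : ℝ≥0) (k : ℕ) :
    Integrable (fun x : ℝ => x ^ k) (gaussianReal 0 v) := by
  by_cases hv : v = 0
  · rw [hv, gaussianReal_zero_var]
    refine (integrable_const ((0:ℝ) ^ k)).congr ?_
    filter_upwards [ae_dirac_eq (0:ℝ) ▸ Filter.eventually_pure.2 rfl] with x hx
    rw [hx]
  · rw [gaussianReal_of_var_ne_zero _ hv, gaussianPDF_def]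
    have h1 : (fun x => ENNReal.ofReal (gaussianPDFReal 0 v x))
        = fun x => ((Real.toNNReal (gaussianPDFReal 0 v x) : ℝ≥0) : ℝ≥0∞) := rfl
    rw [h1, integrable_withDensity_iff_integrable_smul
      ((measurable_gaussianPDFReal 0 v).real_toNNReal)]
    have hb : (0:ℝ) < (2 * v)⁻¹ := by
      have : (0:ℝ) < v := by positivity
      positivity
    have h2 : (fun x : ℝ => (Real.toNNReal (gaussianPDFReal 0 v x)) • x ^ k)
        = fun x : ℝ => (√(2 * π * v))⁻¹ * (x ^ k * Real.exp (-(2*v:ℝ)⁻¹ * x ^ 2)) := by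
      ext x
      rw [NNReal.smul_def, Real.coe_toNNReal _ (gaussianPDFReal_nonneg 0 v x)]
      simp only [gaussianPDFReal, smul_eq_mul, sub_zero]
      rw [show -x ^ 2 / (2 * (v:ℝ)) = -(2*v:ℝ)⁻¹ * x ^ 2 by field_simp]
      ring
    rw [h2]
    exact ((aux_integrable_pow_exp hb k).const_mul _)

private lemma aux_gauss_map_neg (v : ℝ≥0) :
    Measure.map (fun x : ℝ => -x) (gaussianReal 0 v) = gaussianReal 0 v := by
  have h := gaussianReal_map_const_mul (μ := 0) (v := v) (-1)
  have h1 : (fun x : ℝ => -x) = fun x : ℝ => (-1) * x := by ext x; ring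
  have h2 : (NNReal.mk ((-1:ℝ)^2) (sq_nonneg _)) = 1 := by ext; norm_num
  rw [h1]
  rw [h2] at h
  simpa using h

private lemma aux_gauss_odd (v : ℝ≥0) {k : ℕ} (hk : Odd k) :
    ∫ x, x ^ k ∂(gaussianReal 0 v) = 0 := by
  have h1 : ∫ x, x ^ k ∂(gaussianReal 0 v)
      = ∫ x, x ^ k ∂(Measure.map (fun x : ℝ => -x) (gaussianReal 0 v)) := by
    rw [aux_gauss_map_neg]
  rw [integral_map measurable_neg.aemeasurable (by fun_prop)] at h1
  simp only [hk.neg_pow, integral_neg] at h1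
  linarith

private lemma aux_gauss_sq (v : ℝ≥0) :
    ∫ x, x ^ 2 ∂(gaussianReal 0 v) = v := by
  by_cases hv : v = 0
  · rw [hv, gaussianReal_zero_var, integral_dirac]
    norm_num
  · rw [aux_gauss_integral v hv]
    have hvpos : (0:ℝ) < v := by positivity
    have hb : (0:ℝ) < (2 * (v:ℝ))⁻¹ := by positivity
    have h2 : (fun x : ℝ => gaussianPDFReal 0 v x * x ^ 2)
        = fun x : ℝ => (√(2 * π * v))⁻¹ * (x ^ 2 * Real.exp (-(2*v:ℝ)⁻¹ * x ^ 2)) := by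
      ext x
      simp only [gaussianPDFReal, sub_zero]
      rw [show -x ^ 2 / (2 * (v:ℝ)) = -(2*v:ℝ)⁻¹ * x ^ 2 by field_simp]
      ring
    rw [h2, integral_const_mul, aux_integral_pow_exp hb 2 (by decide)]
    have hc : (0:ℝ) < 2 * v := by positivity
    have e1 : ((2*(v:ℝ))⁻¹) ^ (-(((2:ℕ):ℝ)+1)/2) = (2*(v:ℝ)) * √(2*(v:ℝ)) := by
      rw [show (-(((2:ℕ):ℝ)+1)/2) = -(3/2) by norm_num, Real.inv_rpow hc.le,
        Real.rpow_neg hc.le, inv_inv, show (3/2:ℝ) = 1 + 1/2 by norm_num,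
        Real.rpow_add hc, Real.rpow_one, ← Real.sqrt_eq_rpow]
    have e2 : Real.Gamma ((((2:ℕ):ℝ)+1)/2) = √π/2 := by
      rw [show ((((2:ℕ):ℝ))+1)/2 = 1/2 + 1 by norm_num, Real.Gamma_add_one (by norm_num),
        Real.Gamma_one_half_eq]
      ring
    rw [e1, e2, show 2*π*(v:ℝ) = π * (2*v) by ring, Real.sqrt_mul pi_pos.le]
    have hsp : √π ≠ 0 := by positivity
    have hsc : √(2*(v:ℝ)) ≠ 0 := by positivity
    field_simp

private lemma aux_gauss_fourth (v : ℝ≥0) :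
    ∫ x, x ^ 4 ∂(gaussianReal 0 v) = 3 * (v:ℝ) ^ 2 := by
  by_cases hv : v = 0
  · rw [hv, gaussianReal_zero_var, integral_dirac]
    norm_num
  · rw [aux_gauss_integral v hv]
    have hvpos : (0:ℝ) < v := by positivity
    have hb : (0:ℝ) < (2 * (v:ℝ))⁻¹ := by positivity
    have h2 : (fun x : ℝ => gaussianPDFReal 0 v x * x ^ 4)
        = fun x : ℝ => (√(2 * π * v))⁻¹ * (x ^ 4 * Real.exp (-(2*v:ℝ)⁻¹ * x ^ 2)) := by
      ext x
      simp only [gaussianPDFReal, sub_zero]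
      rw [show -x ^ 2 / (2 * (v:ℝ)) = -(2*v:ℝ)⁻¹ * x ^ 2 by field_simp]
      ring
    rw [h2, integral_const_mul, aux_integral_pow_exp hb 4 (by decide)]
    have hc : (0:ℝ) < 2 * v := by positivity
    have e1 : ((2*(v:ℝ))⁻¹) ^ (-(((4:ℕ):ℝ)+1)/2) = (2*(v:ℝ))^2 * √(2*(v:ℝ)) := by
      rw [show (-(((4:ℕ):ℝ)+1)/2) = -(5/2) by norm_num, Real.inv_rpow hc.le,
        Real.rpow_neg hc.le, inv_inv, show (5/2:ℝ) = 2 + 1/2 by norm_num,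
        Real.rpow_add hc, ← Real.sqrt_eq_rpow, show ((2:ℝ)) = ((2:ℕ):ℝ) by norm_num,
        Real.rpow_natCast]
    have e2 : Real.Gamma ((((4:ℕ):ℝ)+1)/2) = 3*√π/4 := by
      rw [show ((((4:ℕ):ℝ))+1)/2 = (1/2 + 1) + 1 by norm_num,
        Real.Gamma_add_one (by norm_num), Real.Gamma_add_one (by norm_num),
        Real.Gamma_one_half_eq]
      ring
    rw [e1, e2, show 2*π*(v:ℝ) = π * (2*v) by ring, Real.sqrt_mul pi_pos.le]
    have hsp : √π ≠ 0 := by positivity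
    have hsc : √(2*(v:ℝ)) ≠ 0 := by positivity
    field_simp
    ring


private lemma aux_int_pow_of_mem4 {Ω : Type*} [MeasurableSpace Ω] {P : Measure Ω}
    [IsProbabilityMeasure P] {f : Ω → ℝ} (hf : MemLp f 4 P) {i : ℕ} (hi : i ≤ 4) :
    Integrable (fun ω => f ω ^ i) P := by
  have h4 : Integrable (fun ω => ‖f ω‖ ^ (4:ℝ)) P := by
    have := hf.integrable_norm_rpow (by norm_num) (by norm_num)
    simpa using this
  refine ((integrable_const (1:ℝ)).add h4).mono'
    (hf.aestronglyMeasurable.aemeasurable.pow_const i).aestronglyMeasurable ?_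
  filter_upwards with ω
  have h2 : ‖f ω‖ ^ (4:ℝ) = ‖f ω‖ ^ (4:ℕ) := by
    rw [show ((4:ℝ)) = ((4:ℕ):ℝ) by norm_num, Real.rpow_natCast]
  simp only [Pi.add_apply]
  rw [norm_pow, h2]
  rcases le_total (‖f ω‖) 1 with h | h
  · have : ‖f ω‖ ^ i ≤ 1 := pow_le_one₀ (norm_nonneg _) h
    have h0 : (0:ℝ) ≤ ‖f ω‖ ^ (4:ℕ) := by positivity
    linarith
  · have h1 : ‖f ω‖ ^ i ≤ ‖f ω‖ ^ (4:ℕ) := pow_le_pow_right₀ h hi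
    linarith

/-- P-SIMEX computation for the fourth moment: if `X, W, N` are mutually independent,
`W` is symmetric about zero with variance `σ²` and fourth moment `m₄`, `N` is Gaussian
with mean `0` and variance `λσ²` (`λ ≥ 0`), and `X` has finite fourth moment with
`μ₂ = E[X²]`, `μ₄ = E[X⁴]`, then
`E[(X + W + N)⁴] = μ₄ + 6μ₂(1+λ)σ² + m₄ + 6λσ⁴ + 3λ²σ⁴`, and the quadratic
extrapolant `h(λ)` matching this for all `λ ≥ 0` satisfies `h(-1) = μ₄ + m₄ - 3σ⁴`;
the residual bias `m₄ - 3σ⁴` vanishes exactly when `m₄ = 3σ⁴`. -/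
theorem stmt9 {Ω : Type*} [MeasurableSpace Ω] (P : Measure Ω) [IsProbabilityMeasure P]
    (lam σ2 m4 μ2 μ4 : ℝ) (hlam : 0 ≤ lam) (hσ2 : 0 ≤ σ2)
    (X W N : Ω → ℝ)
    (hXmeas : Measurable X) (hWmeas : Measurable W) (hNmeas : Measurable N)
    (hindep : iIndepFun ![X, W, N] P)
    (hsym : IdentDistrib W (fun ω => -W ω) P P)
    (hX4 : MemLp X 4 P) (hW4 : MemLp W 4 P)
    (hvar : variance W P = σ2)
    (hm4 : ∫ ω, W ω ^ 4 ∂P = m4)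
    (hgauss : Measure.map N P = gaussianReal 0 (Real.toNNReal (lam * σ2)))
    (hμ2 : ∫ ω, X ω ^ 2 ∂P = μ2) (hμ4 : ∫ ω, X ω ^ 4 ∂P = μ4)
    (h : ℝ → ℝ)
    (hh : ∀ l : ℝ, h l = μ4 + 6 * μ2 * (1 + l) * σ2 + m4 + 6 * l * σ2 ^ 2 + 3 * l ^ 2 * σ2 ^ 2) :
    (∫ ω, (X ω + W ω + N ω) ^ 4 ∂P =
      μ4 + 6 * μ2 * (1 + lam) * σ2 + m4 + 6 * lam * σ2 ^ 2 + 3 * lam ^ 2 * σ2 ^ 2) ∧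
    h (-1) = μ4 + m4 - 3 * σ2 ^ 2 ∧
    (m4 - 3 * σ2 ^ 2 = 0 ↔ m4 = 3 * σ2 ^ 2) := by
  refine ⟨?_, by rw [hh]; ring, by constructor <;> intro h' <;> linarith⟩
  set v : ℝ≥0 := Real.toNNReal (lam * σ2) with hv
  have hvr : (v:ℝ) = lam * σ2 := Real.coe_toNNReal _ (mul_nonneg hlam hσ2)
  have hm : ∀ i, Measurable (![X, W, N] i) := by
    intro i; fin_cases i <;> simpa
  have hY4 : MemLp (fun ω => X ω + W ω) 4 P := hX4.add hW4
  have hYmeas : Measurable fun ω => X ω + W ω := hXmeas.add hWmeas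
  -- independence
  have hXW : IndepFun X W P := by
    have := hindep.indepFun (i := 0) (j := 1) (by decide)
    simpa using this
  have hYN : IndepFun (fun ω => X ω + W ω) N P := by
    have := (hindep.indepFun_prodMk hm 0 1 2 (by decide) (by decide)).comp
      (measurable_fst.add measurable_snd) measurable_id
    simpa [Function.comp_def] using this
  -- integrability
  have hiX : ∀ i, i ≤ 4 → Integrable (fun ω => X ω ^ i) P :=
    fun i hi => aux_int_pow_of_mem4 hX4 hi
  have hiW : ∀ i, i ≤ 4 → Integrable (fun ω => W ω ^ i) P :=
    fun i hi => aux_int_pow_of_mem4 hW4 hi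
  have hiY : ∀ i, i ≤ 4 → Integrable (fun ω => (X ω + W ω) ^ i) P :=
    fun i hi => aux_int_pow_of_mem4 hY4 hi
  have hiN : ∀ k : ℕ, Integrable (fun ω => N ω ^ k) P := by
    intro k
    have h1 : Integrable (fun x : ℝ => x ^ k) (Measure.map N P) := by
      rw [hgauss]; exact aux_gauss_integrable v k
    rw [integrable_map_measure (by fun_prop) hNmeas.aemeasurable] at h1
    simpa [Function.comp_def] using h1
  have hiXW : ∀ i j : ℕ, i ≤ 4 → j ≤ 4 →
      Integrable (fun ω => X ω ^ i * W ω ^ j) P := by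
    intro i j hi hj
    have := (hXW.comp (measurable_id.pow_const i)
      (measurable_id.pow_const j)).integrable_mul (hiX i hi) (hiW j hj)
    simpa [Function.comp_def, Pi.mul_def] using this
  have hiYN : ∀ i k : ℕ, i ≤ 4 →
      Integrable (fun ω => (X ω + W ω) ^ i * N ω ^ k) P := by
    intro i k hi
    have := (hYN.comp (measurable_id.pow_const i)
      (measurable_id.pow_const k)).integrable_mul (hiY i hi) (hiN k)
    simpa [Function.comp_def, Pi.mul_def] using this
  -- splitting of expectations
  have hsplitXW : ∀ i j : ℕ,
      ∫ ω, X ω ^ i * W ω ^ j ∂P = (∫ ω, X ω ^ i ∂P) * ∫ ω, W ω ^ j ∂P := by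
    intro i j
    have := (hXW.comp (measurable_id.pow_const i)
      (measurable_id.pow_const j)).integral_mul_eq_mul_integral
      ((hXmeas.pow_const i).aestronglyMeasurable)
      ((hWmeas.pow_const j).aestronglyMeasurable)
    simpa [Function.comp] using this
  have hsplitYN : ∀ i k : ℕ,
      ∫ ω, (X ω + W ω) ^ i * N ω ^ k ∂P
        = (∫ ω, (X ω + W ω) ^ i ∂P) * ∫ ω, N ω ^ k ∂P := by
    intro i k
    have := (hYN.comp (measurable_id.pow_const i)
      (measurable_id.pow_const k)).integral_mul_eq_mul_integral
      ((hYmeas.pow_const i).aestronglyMeasurable)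
      ((hNmeas.pow_const k).aestronglyMeasurable)
    simpa [Function.comp] using this
  -- moments of N
  have hmapint : ∀ k : ℕ, ∫ ω, N ω ^ k ∂P = ∫ x, x ^ k ∂(gaussianReal 0 v) := by
    intro k
    rw [← hgauss, integral_map hNmeas.aemeasurable (by fun_prop)]
  have hN1 : ∫ ω, N ω ^ 1 ∂P = 0 := (hmapint 1).trans (aux_gauss_odd v (by decide))
  have hN2 : ∫ ω, N ω ^ 2 ∂P = lam * σ2 := (hmapint 2).trans (by rw [aux_gauss_sq, hvr])
  have hN3 : ∫ ω, N ω ^ 3 ∂P = 0 := (hmapint 3).trans (aux_gauss_odd v (by decide))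
  have hN4 : ∫ ω, N ω ^ 4 ∂P = 3 * (lam * σ2) ^ 2 :=
    (hmapint 4).trans (by rw [aux_gauss_fourth, hvr])
  -- moments of W
  have hW1 : ∫ ω, W ω ^ 1 ∂P = 0 := by
    have h1 := hsym.integral_eq
    rw [integral_neg] at h1
    simp only [pow_one]
    linarith
  have hW3 : ∫ ω, W ω ^ 3 ∂P = 0 := by
    have h1 := (hsym.comp (measurable_id.pow_const 3)).integral_eq
    simp only [Function.comp, id_eq, Odd.neg_pow (⟨1, by norm_num⟩ : Odd 3), integral_neg] at h1
    linarith
  have hW2 : ∫ ω, W ω ^ 2 ∂P = σ2 := by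
    have h1 := variance_eq_sub (hW4.mono_exponent (by norm_num))
    rw [hvar] at h1
    have h2 : (∫ ω, W ω ∂P) = 0 := by simpa using hW1
    simp only [Pi.pow_apply] at h1
    rw [h2] at h1
    simp at h1
    linarith
  -- fourth moment of X + W
  have expY : ∫ ω, (X ω + W ω) ^ 4 ∂P = μ4 + 6 * μ2 * σ2 + m4 := by
    have e : (fun ω => (X ω + W ω) ^ 4)
        = fun ω => X ω ^ 4 + 4 * (X ω ^ 3 * W ω ^ 1) + 6 * (X ω ^ 2 * W ω ^ 2)
          + 4 * (X ω ^ 1 * W ω ^ 3) + X ω ^ 0 * W ω ^ 4 :=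
      funext fun ω => by ring
    have I1 : Integrable (fun ω => X ω ^ 4) P := hiX 4 le_rfl
    have I2 : Integrable (fun ω => 4 * (X ω ^ 3 * W ω ^ 1)) P :=
      (hiXW 3 1 (by norm_num) (by norm_num)).const_mul 4
    have I3 : Integrable (fun ω => 6 * (X ω ^ 2 * W ω ^ 2)) P :=
      (hiXW 2 2 (by norm_num) (by norm_num)).const_mul 6
    have I4 : Integrable (fun ω => 4 * (X ω ^ 1 * W ω ^ 3)) P :=
      (hiXW 1 3 (by norm_num) (by norm_num)).const_mul 4
    have I5 : Integrable (fun ω => X ω ^ 0 * W ω ^ 4) P :=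
      hiXW 0 4 (by norm_num) (by norm_num)
    have I12 : Integrable (fun ω => X ω ^ 4 + 4 * (X ω ^ 3 * W ω ^ 1)) P := I1.add I2
    have I123 : Integrable (fun ω => X ω ^ 4 + 4 * (X ω ^ 3 * W ω ^ 1)
        + 6 * (X ω ^ 2 * W ω ^ 2)) P := I12.add I3
    have I1234 : Integrable (fun ω => X ω ^ 4 + 4 * (X ω ^ 3 * W ω ^ 1)
        + 6 * (X ω ^ 2 * W ω ^ 2) + 4 * (X ω ^ 1 * W ω ^ 3)) P := I123.add I4
    rw [e, integral_add I1234 I5,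
      integral_add I123 I4, integral_add I12 I3,
      integral_add I1 I2, integral_const_mul 4, integral_const_mul 6, integral_const_mul 4,
      hsplitXW 3 1, hsplitXW 2 2, hsplitXW 1 3, hsplitXW 0 4,
      hμ4, hμ2, hW1, hW2, hW3, hm4]
    have h0 : ∫ ω, X ω ^ 0 ∂P = 1 := by simp
    rw [h0]
    ring
  -- second moment of X + W
  have expY2 : ∫ ω, (X ω + W ω) ^ 2 ∂P = μ2 + σ2 := by
    have e : (fun ω => (X ω + W ω) ^ 2)
        = fun ω => X ω ^ 2 + 2 * (X ω ^ 1 * W ω ^ 1) + X ω ^ 0 * W ω ^ 2 :=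
      funext fun ω => by ring
    have I1 : Integrable (fun ω => X ω ^ 2) P := hiX 2 (by norm_num)
    have I2 : Integrable (fun ω => 2 * (X ω ^ 1 * W ω ^ 1)) P :=
      (hiXW 1 1 (by norm_num) (by norm_num)).const_mul 2
    have I3 : Integrable (fun ω => X ω ^ 0 * W ω ^ 2) P :=
      hiXW 0 2 (by norm_num) (by norm_num)
    have I12 : Integrable (fun ω => X ω ^ 2 + 2 * (X ω ^ 1 * W ω ^ 1)) P := I1.add I2
    rw [e, integral_add I12 I3, integral_add I1 I2, integral_const_mul 2,
      hsplitXW 1 1, hsplitXW 0 2, hμ2, hW1, hW2]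
    have h0 : ∫ ω, X ω ^ 0 ∂P = 1 := by simp
    rw [h0]
    ring
  -- main expansion
  have e : (fun ω => (X ω + W ω + N ω) ^ 4)
      = fun ω => (X ω + W ω) ^ 4 + 4 * ((X ω + W ω) ^ 3 * N ω ^ 1)
        + 6 * ((X ω + W ω) ^ 2 * N ω ^ 2) + 4 * ((X ω + W ω) ^ 1 * N ω ^ 3)
        + (X ω + W ω) ^ 0 * N ω ^ 4 :=
    funext fun ω => by ring
  have I1 : Integrable (fun ω => (X ω + W ω) ^ 4) P := hiY 4 le_rfl
  have I2 : Integrable (fun ω => 4 * ((X ω + W ω) ^ 3 * N ω ^ 1)) P :=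
    (hiYN 3 1 (by norm_num)).const_mul 4
  have I3 : Integrable (fun ω => 6 * ((X ω + W ω) ^ 2 * N ω ^ 2)) P :=
    (hiYN 2 2 (by norm_num)).const_mul 6
  have I4 : Integrable (fun ω => 4 * ((X ω + W ω) ^ 1 * N ω ^ 3)) P :=
    (hiYN 1 3 (by norm_num)).const_mul 4
  have I5 : Integrable (fun ω => (X ω + W ω) ^ 0 * N ω ^ 4) P :=
    hiYN 0 4 (by norm_num)
  have I12 : Integrable (fun ω => (X ω + W ω) ^ 4 + 4 * ((X ω + W ω) ^ 3 * N ω ^ 1)) P := I1.add I2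
  have I123 : Integrable (fun ω => (X ω + W ω) ^ 4 + 4 * ((X ω + W ω) ^ 3 * N ω ^ 1)
      + 6 * ((X ω + W ω) ^ 2 * N ω ^ 2)) P := I12.add I3
  have I1234 : Integrable (fun ω => (X ω + W ω) ^ 4 + 4 * ((X ω + W ω) ^ 3 * N ω ^ 1)
      + 6 * ((X ω + W ω) ^ 2 * N ω ^ 2) + 4 * ((X ω + W ω) ^ 1 * N ω ^ 3)) P := I123.add I4
  rw [e, integral_add I1234 I5,
    integral_add I123 I4, integral_add I12 I3,
    integral_add I1 I2, integral_const_mul 4, integral_const_mul 6, integral_const_mul 4,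
    hsplitYN 3 1, hsplitYN 2 2, hsplitYN 1 3, hsplitYN 0 4,
    hN1, hN2, hN3, hN4, expY, expY2]
  have h0 : ∫ ω, (X ω + W ω) ^ 0 ∂P = 1 := by simp
  rw [h0]
  ring
end
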